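/- Let J ⊆ Δ and u ∈ W. If w_J w_Δ <_∅ u w_Δ in the weak left order on W, then u ∈ W_J. -/

import Mathlib

/-! Common framework: a reduced (crystallographic) root system `Φ` in a real vector
space `V`, with Weyl group `W` (generated by the reflections `s_α`, `α ∈ Φ`, inside the
group of linear automorphisms of `V`), a base `Δ` of simple roots with positive system
`Pos = Φ⁺`, and the associated combinatorics. -/

open scoped Classical Pointwise

namespace PaperSp

variable {V : Type} [AddCommGroup V] [Module ℝ V]

/-- The data of a reduced crystallographic root system in `V`:  a finite spanning set
`Phi` of nonzero vectors together with, for each root `α`, a linear functional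
`pairing α = ⟨·, α∨⟩` taking the value `2` at `α`, such that the associated reflections
`s_α : β ↦ β − ⟨β, α∨⟩α` preserve `Phi`, all pairings are integral, and the only
multiples of a root `α` which are roots are `±α`. -/
structure RootSystemData (V : Type) [AddCommGroup V] [Module ℝ V] : Type where
  Phi : Set V
  pairing : V → V →ₗ[ℝ] ℝ
  pairing_self : ∀ α, α ∈ Phi → pairing α α = 2
  finite : Phi.Finite
  span_top : Submodule.span ℝ Phi = ⊤
  zero_not_mem : (0 : V) ∉ Phi
  crystallographic : ∀ α ∈ Phi, ∀ β ∈ Phi, ∃ n : ℤ, pairing α β = (n : ℝ)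
  reduced : ∀ α ∈ Phi, ∀ t : ℝ, t • α ∈ Phi → t = 1 ∨ t = -1
  reflect_mem : ∀ α ∈ Phi, ∀ β ∈ Phi, β - pairing α β • α ∈ Phi

/-- The reflection `s_α` associated to a root `α` (the identity if `α ∉ Φ`). -/
noncomputable def RootSystemData.refl (R : RootSystemData V) (α : V) : V ≃ₗ[ℝ] V :=
  if h : α ∈ R.Phi then Module.reflection (R.pairing_self α h) else 1

/-- The set of reflections `{s_α : α ∈ K}` associated to a set `K` of roots. -/
noncomputable def refls (R : RootSystemData V) (K : Set V) : Set (V ≃ₗ[ℝ] V) :=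
  {s | ∃ α ∈ K, s = R.refl α}

/-- The Weyl group `W`, generated by all reflections `s_α`, `α ∈ Φ`. -/
noncomputable def weylGroup (R : RootSystemData V) : Subgroup (V ≃ₗ[ℝ] V) :=
  Subgroup.closure (refls R R.Phi)

/-- The subgroup `W_J` generated by the reflections `s_α`, `α ∈ J`. -/
noncomputable def WsubJ (R : RootSystemData V) (J : Set V) : Subgroup (V ≃ₗ[ℝ] V) :=
  Subgroup.closure (refls R J)

/-- The word length of `w` with respect to a generating set `S` of a group. -/
noncomputable def lengthWrt {G : Type*} [Group G] (S : Set G) (w : G) : ℕ :=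
  sInf {n | ∃ ls : List G, ls.length = n ∧ (∀ x ∈ ls, x ∈ S) ∧ ls.prod = w}

/-- The length function `ℓ` on `W` with respect to the simple reflections
`S = {s_α : α ∈ Δ}`. -/
noncomputable def len (R : RootSystemData V) (Δ : Set V) (w : V ≃ₗ[ℝ] V) : ℕ :=
  lengthWrt (refls R Δ) w

/-- `Pos` and `Δ` form a positive system with base `Δ` for the root system `R`:
`Φ = Pos ⊔ (−Pos)`, `Δ ⊆ Pos` is linearly independent, and every positive root is a
nonnegative integral combination of simple roots. -/
structure IsBase (R : RootSystemData V) (Pos Δ : Set V) : Prop where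
  pos_sub : Pos ⊆ R.Phi
  mem_or_neg : ∀ α ∈ R.Phi, α ∈ Pos ∨ -α ∈ Pos
  not_both : ∀ α : V, ¬(α ∈ Pos ∧ -α ∈ Pos)
  delta_sub : Δ ⊆ Pos
  indep : LinearIndependent ℝ (fun a : Δ => (a : V))
  decomp : ∀ β ∈ Pos, ∃ c : V →₀ ℕ, (c.support : Set V) ⊆ Δ ∧
    β = c.sum (fun a m => (m : ℝ) • a)

/-- The set `W^J = {w ∈ W : w(α) ∈ Φ⁺ for all α ∈ J}` of minimal length representatives
of `W/W_J`. -/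
noncomputable def WupJ (R : RootSystemData V) (Pos : Set V) (J : Set V) :
    Set (V ≃ₗ[ℝ] V) :=
  {w | w ∈ weylGroup R ∧ ∀ α ∈ J, w α ∈ Pos}

/-- The set `V^J = W^J \ ⋃_{α ∈ Δ\J} W^{J∪{α}}`. -/
noncomputable def VupJ (R : RootSystemData V) (Pos Δ : Set V) (J : Set V) :
    Set (V ≃ₗ[ℝ] V) :=
  {w | w ∈ WupJ R Pos J ∧ ∀ α ∈ Δ, α ∉ J → w ∉ WupJ R Pos (J ∪ {α})}

/-- `Φ_J(1) = Φ⁻ \ (Φ⁻ ∩ W_J·J)`. -/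
noncomputable def PhiJone (R : RootSystemData V) (Pos : Set V) (J : Set V) : Set V :=
  (R.Phi \ Pos) \ {β | ∃ v ∈ WsubJ R J, ∃ α ∈ J, β = v α}

/-- `Φ_J(w) = w · Φ_J(1)`. -/
noncomputable def PhiJ (R : RootSystemData V) (Pos : Set V) (J : Set V)
    (w : V ≃ₗ[ℝ] V) : Set V :=
  (fun x => w x) '' (PhiJone R Pos J)

/-- `hProjJ R Pos J pJ` says that `pJ` is the projection `w ↦ (w)^J` sending an element
of `W` to the unique element of `W^J` in the coset `w W_J`. -/
noncomputable def IsProjJ (R : RootSystemData V) (Pos : Set V) (J : Set V)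
    (pJ : (V ≃ₗ[ℝ] V) → (V ≃ₗ[ℝ] V)) : Prop :=
  ∀ w ∈ weylGroup R, pJ w ∈ WupJ R Pos J ∧ (pJ w)⁻¹ * w ∈ WsubJ R J

/-- The product `s_i ⋯ s_1` of the first `i` members of a sequence in a group. -/
noncomputable def chainProd {G : Type*} [Group G] (s : ℕ → G) (i : ℕ) : G :=
  (((List.range' 1 i).map s).reverse).prod

/-- The chain `w^(0) = w`, `w^(i) = (s_i ⋯ s_1 w)^J` associated to `w` and a sequence
of simple reflections. -/
noncomputable def chainElt {G : Type*} [Group G] (pJ : G → G) (s : ℕ → G) (w : G)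
    (i : ℕ) : G :=
  if i = 0 then w else pJ (chainProd s i * w)

/-- The partial order `<_J`:  `w <_J w'` iff there are simple reflections
`s_1, …, s_r` (`r ≥ 1`) such that, with `w^(i) = (s_i ⋯ s_1 w)^J`, the lengths
`ℓ(w^(i))` are strictly increasing and `w^(r) = w'`.  Taking `pJ = id`
(and `J = ∅`) gives the weak left order `<_∅`. -/
noncomputable def ltJ {G : Type*} [Group G] (S : Set G) (ℓ : G → ℕ) (pJ : G → G)
    (w w' : G) : Prop :=
  ∃ r : ℕ, 1 ≤ r ∧ ∃ s : ℕ → G,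
    (∀ m, 1 ≤ m → m ≤ r → s m ∈ S) ∧
    (∀ m, 1 ≤ m → m ≤ r → ℓ (chainElt pJ s w (m - 1)) < ℓ (chainElt pJ s w m)) ∧
    chainElt pJ s w r = w'

/-- `w` is the longest element of a subgroup `H` of `W` (with respect to `ℓ`). -/
noncomputable def IsLongestIn (R : RootSystemData V) (Δ : Set V)
    (H : Subgroup (V ≃ₗ[ℝ] V)) (w : V ≃ₗ[ℝ] V) : Prop :=
  w ∈ H ∧ ∀ v ∈ H, len R Δ v ≤ len R Δ w

end PaperSp

namespace PaperSp


open Set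

variable {V : Type} [AddCommGroup V] [Module ℝ V]

section Aux

variable {R : RootSystemData V} {Pos Δ J : Set V}

lemma refl_apply_mem {α : V} (hα : α ∈ R.Phi) (β : V) :
    R.refl α β = β - R.pairing α β • α := by
  rw [RootSystemData.refl, dif_pos hα]
  exact Module.reflection_apply β _

lemma refl_apply_self {α : V} (hα : α ∈ R.Phi) : R.refl α α = -α := by
  rw [RootSystemData.refl, dif_pos hα]
  exact Module.reflection_apply_self _

lemma refl_invol (α : V) (β : V) : R.refl α (R.refl α β) = β := by
  rw [RootSystemData.refl]
  split
  · exact Module.involutive_reflection _ β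
  · rfl

lemma refl_mul_self (α : V) : R.refl α * R.refl α = 1 := by
  apply LinearEquiv.toLinearMap_injective
  apply LinearMap.ext
  intro x
  exact refl_invol α x

lemma refl_inv (α : V) : (R.refl α)⁻¹ = R.refl α :=
  inv_eq_of_mul_eq_one_right (refl_mul_self α)

lemma refl_mem_phi {α β : V} (hα : α ∈ R.Phi) (hβ : β ∈ R.Phi) :
    R.refl α β ∈ R.Phi := by
  rw [refl_apply_mem hα]
  exact R.reflect_mem α hα β hβ

lemma neg_mem_phi {β : V} (hβ : β ∈ R.Phi) : -β ∈ R.Phi := by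
  have := R.reflect_mem β hβ β hβ
  rw [R.pairing_self β hβ, two_smul] at this
  simpa [sub_add_eq_sub_sub] using this

lemma phi_ne_zero {β : V} (hβ : β ∈ R.Phi) : β ≠ 0 := fun h => R.zero_not_mem (h ▸ hβ)

/-- `w` is a product of reflections from `K`. -/
def IsWordOf (R : RootSystemData V) (K : Set V) (w : V ≃ₗ[ℝ] V) : Prop :=
  ∃ l : List (V ≃ₗ[ℝ] V), (∀ x ∈ l, x ∈ refls R K) ∧ l.prod = w

lemma IsWordOf.one : IsWordOf R K 1 := ⟨[], by simp, rfl⟩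

lemma IsWordOf.mul {K : Set V} {w w' : V ≃ₗ[ℝ] V} (h : IsWordOf R K w)
    (h' : IsWordOf R K w') : IsWordOf R K (w * w') := by
  obtain ⟨l, hl, hlp⟩ := h
  obtain ⟨l', hl', hlp'⟩ := h'
  refine ⟨l ++ l', fun x hx => ?_, by rw [List.prod_append, hlp, hlp']⟩
  rcases List.mem_append.1 hx with h | h
  exacts [hl x h, hl' x h]

lemma IsWordOf.simple {K : Set V} {s : V ≃ₗ[ℝ] V} (h : s ∈ refls R K) :
    IsWordOf R K s := ⟨[s], by simpa using h, by simp⟩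

lemma IsWordOf.mono {K K' : Set V} (hK : K ⊆ K') {w : V ≃ₗ[ℝ] V}
    (h : IsWordOf R K w) : IsWordOf R K' w := by
  obtain ⟨l, hl, hlp⟩ := h
  refine ⟨l, fun x hx => ?_, hlp⟩
  obtain ⟨α, hα, hx⟩ := hl x hx
  exact ⟨α, hK hα, hx⟩

lemma IsWordOf.inv {K : Set V} {w : V ≃ₗ[ℝ] V} (h : IsWordOf R K w) :
    IsWordOf R K w⁻¹ := by
  obtain ⟨l, hl, hlp⟩ := h
  refine ⟨l.reverse, fun x hx => hl x (List.mem_reverse.1 hx), ?_⟩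
  subst hlp
  induction l with
  | nil => simp
  | cons s t ih =>
      have hs : s ∈ refls R K := hl s (List.mem_cons_self)
      obtain ⟨α, hα, rfl⟩ := hs
      rw [List.reverse_cons, List.prod_append, List.prod_singleton, List.prod_cons,
        mul_inv_rev, ih (fun x hx => hl x (List.mem_cons_of_mem _ hx)), refl_inv]

lemma isWordOf_iff_mem_closure {K : Set V} {w : V ≃ₗ[ℝ] V} :
    IsWordOf R K w ↔ w ∈ Subgroup.closure (refls R K) := by
  constructor
  · rintro ⟨l, hl, rfl⟩
    exact list_prod_mem (fun x hx => Subgroup.subset_closure (hl x hx))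
  · intro hw
    refine Subgroup.closure_induction (fun x hx => IsWordOf.simple hx) IsWordOf.one
      (fun x y _ _ hx hy => hx.mul hy) (fun x _ hx => hx.inv) hw

lemma IsWordOf.maps_phi {K : Set V} (hK : K ⊆ R.Phi) {w : V ≃ₗ[ℝ] V}
    (h : IsWordOf R K w) {β : V} (hβ : β ∈ R.Phi) : w β ∈ R.Phi := by
  obtain ⟨l, hl, rfl⟩ := h
  induction l with
  | nil => simpa using hβ
  | cons s t ih =>
      obtain ⟨α, hα, rfl⟩ := hl s (List.mem_cons_self)
      have := ih (fun x hx => hl x (List.mem_cons_of_mem _ hx))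
      rw [List.prod_cons]
      exact refl_mem_phi (hK hα) this


/-- Nonnegative real combinations of elements of `K`. -/
def coneR (K : Set V) : Set V :=
  {v | ∃ f : V →₀ ℝ, ↑f.support ⊆ K ∧ (∀ x, 0 ≤ f x) ∧ v = f.sum fun a r => r • a}

lemma sum_smul_eq_lc (f : V →₀ ℝ) :
    (f.sum fun a r => r • a) = Finsupp.linearCombination ℝ id f := by
  simp [Finsupp.linearCombination_apply]

lemma supported_eq_zero (hBase : IsBase R Pos Δ) {f : V →₀ ℝ} (hs : ↑f.support ⊆ Δ)
    (h : (f.sum fun a r => r • a) = 0) : f = 0 := by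
  have key : ∀ l ∈ Finsupp.supported ℝ ℝ Δ, Finsupp.linearCombination ℝ id l = 0 → l = 0 := by
    rw [← linearIndepOn_iff]
    exact hBase.indep
  exact key f (Finsupp.mem_supported ℝ f |>.2 hs) (by rw [← sum_smul_eq_lc]; exact h)

lemma supported_sum_eq (hBase : IsBase R Pos Δ) {f g : V →₀ ℝ} (hf : ↑f.support ⊆ Δ)
    (hg : ↑g.support ⊆ Δ) (h : (f.sum fun a r => r • a) = g.sum fun a r => r • a) :
    f = g := by
  have hfg : f - g = 0 := by
    apply supported_eq_zero hBase (f := f - g)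
    · intro a ha
      rcases Finset.mem_union.1 (Finsupp.support_sub ha) with h' | h'
      exacts [hf h', hg h']
    · rw [sum_smul_eq_lc, map_sub, ← sum_smul_eq_lc, ← sum_smul_eq_lc, h, sub_self]
  exact sub_eq_zero.1 hfg

/-- Cast an `ℕ`-finsupp to an `ℝ`-finsupp. -/
noncomputable def castR (c : V →₀ ℕ) : V →₀ ℝ := c.mapRange Nat.cast Nat.cast_zero

lemma castR_support (c : V →₀ ℕ) : (castR c).support = c.support :=
  Finsupp.support_mapRange_of_injective Nat.cast_zero c Nat.cast_injective

lemma castR_apply (c : V →₀ ℕ) (x : V) : castR c x = (c x : ℝ) := rfl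

lemma castR_nonneg (c : V →₀ ℕ) (x : V) : 0 ≤ castR c x := by
  rw [castR_apply]; positivity

lemma castR_sum (c : V →₀ ℕ) :
    ((castR c).sum fun a r => r • a) = c.sum fun a m => (m : ℝ) • a :=
  Finsupp.sum_mapRange_index (by simp)

lemma coneR_zero {K : Set V} : (0 : V) ∈ coneR K :=
  ⟨0, by simp, by simp, by simp⟩

lemma coneR_add {K : Set V} {u v : V} (hu : u ∈ coneR K) (hv : v ∈ coneR K) :
    u + v ∈ coneR K := by
  obtain ⟨f, hfs, hf0, rfl⟩ := hu
  obtain ⟨g, hgs, hg0, rfl⟩ := hv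
  refine ⟨f + g, fun a ha => ?_, fun x => by
      simp only [Finsupp.add_apply]; exact add_nonneg (hf0 x) (hg0 x), ?_⟩
  · rcases Finset.mem_union.1 (Finsupp.support_add ha) with h' | h'
    exacts [hfs h', hgs h']
  · rw [sum_smul_eq_lc, sum_smul_eq_lc, sum_smul_eq_lc, map_add]

lemma coneR_smul {K : Set V} {v : V} (c : ℝ) (hc : 0 ≤ c) (hv : v ∈ coneR K) :
    c • v ∈ coneR K := by
  obtain ⟨f, hfs, hf0, rfl⟩ := hv
  refine ⟨c • f, fun a ha => hfs (Finsupp.support_smul ha), fun x => by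
      simp only [Finsupp.smul_apply, smul_eq_mul]; exact mul_nonneg hc (hf0 x), ?_⟩
  rw [sum_smul_eq_lc, sum_smul_eq_lc, map_smul]

lemma sum_mem_coneR {K : Set V} {s : Finset V} {g : V → V}
    (hg : ∀ a ∈ s, g a ∈ coneR K) : (∑ a ∈ s, g a) ∈ coneR K := by
  classical
  induction s using Finset.induction with
  | empty => simpa using coneR_zero
  | insert _ _ hx ih =>
      rw [Finset.sum_insert hx]
      exact coneR_add (hg _ (Finset.mem_insert_self _ _))
        (ih fun a ha => hg a (Finset.mem_insert_of_mem ha))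

lemma mem_coneR_of_decomp {K : Set V} {c : V →₀ ℕ} (hc : ↑c.support ⊆ K) :
    (c.sum fun a m => (m : ℝ) • a) ∈ coneR K :=
  ⟨castR c, by rw [castR_support]; exact hc, castR_nonneg c, (castR_sum c).symm⟩

lemma pos_sub_coneR (hBase : IsBase R Pos Δ) : Pos ⊆ coneR Δ := by
  intro β hβ
  obtain ⟨c, hc, rfl⟩ := hBase.decomp β hβ
  exact mem_coneR_of_decomp hc

lemma coneR_eq_zero (hBase : IsBase R Pos Δ) {v : V} (h : v ∈ coneR Δ)
    (h' : -v ∈ coneR Δ) : v = 0 := by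
  obtain ⟨f, hfs, hf0, rfl⟩ := h
  obtain ⟨g, hgs, hg0, hg⟩ := h'
  have hsum : ((f + g).sum fun a r => r • a) = 0 := by
    rw [sum_smul_eq_lc, map_add, ← sum_smul_eq_lc, ← sum_smul_eq_lc, ← hg, add_neg_cancel]
  have hfg : f + g = 0 := by
    apply supported_eq_zero hBase (f := f + g) ?_ hsum
    intro a ha
    rcases Finset.mem_union.1 (Finsupp.support_add ha) with h' | h'
    exacts [hfs h', hgs h']
  have hf : f = 0 := by
    ext x
    have h1 : f x + g x = 0 := by
      have := DFunLike.congr_fun hfg x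
      simpa using this
    have := hf0 x
    have := hg0 x
    simp only [Finsupp.coe_zero, Pi.zero_apply]
    linarith
  simp [hf]

/-- Lemma A:  a simple reflection permutes the positive roots other than its own. -/
lemma refl_mem_pos (hBase : IsBase R Pos Δ) {α β : V} (hα : α ∈ Δ) (hβ : β ∈ Pos)
    (hne : β ≠ α) : R.refl α β ∈ Pos := by
  have hαP : α ∈ Pos := hBase.delta_sub hα
  have hαΦ : α ∈ R.Phi := hBase.pos_sub hαP
  have hβΦ : β ∈ R.Phi := hBase.pos_sub hβ
  have hγΦ : R.refl α β ∈ R.Phi := refl_mem_phi hαΦ hβΦ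
  rcases hBase.mem_or_neg _ hγΦ with h | h
  · exact h
  exfalso
  obtain ⟨c, hc, hcs⟩ := hBase.decomp β hβ
  obtain ⟨d, hd, hds⟩ := hBase.decomp _ h
  have hsingle : ((Finsupp.single α (R.pairing α β)).sum fun a r => r • a)
      = R.pairing α β • α := Finsupp.sum_single_index (by simp)
  have key : ((castR c + castR d).sum fun a r => r • a)
      = (Finsupp.single α (R.pairing α β)).sum fun a r => r • a := by
    rw [hsingle, sum_smul_eq_lc, map_add, ← sum_smul_eq_lc, ← sum_smul_eq_lc,
      castR_sum, castR_sum, ← hcs, ← hds]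
    rw [refl_apply_mem hαΦ]
    abel
  have heq : castR c + castR d = Finsupp.single α (R.pairing α β) := by
    apply supported_sum_eq hBase ?_ ?_ key
    · intro a ha
      rcases Finset.mem_union.1 (Finsupp.support_add ha) with h' | h' <;>
        rw [castR_support] at h'
      exacts [hc h', hd h']
    · intro a ha
      have := Finsupp.support_single_subset ha
      simp only [Finset.mem_singleton] at this
      exact this ▸ hα
  have hsupp : ∀ a, a ≠ α → c a = 0 := by
    intro a hane
    have h0 := DFunLike.congr_fun heq a
    rw [Finsupp.add_apply, castR_apply, castR_apply, Finsupp.single_apply,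
      if_neg (fun h' => hane h'.symm)] at h0
    have hc1 : (0:ℝ) ≤ (c a : ℝ) := Nat.cast_nonneg _
    have hd1 : (0:ℝ) ≤ (d a : ℝ) := Nat.cast_nonneg _
    have h1 : (c a : ℝ) = 0 := by linarith
    exact_mod_cast h1
  have hss : c.support ⊆ {α} := fun a ha => Finset.mem_singleton.2 (by
    by_contra h'
    exact Finsupp.mem_support_iff.1 ha (hsupp a h'))
  have hβα : β = (c α : ℝ) • α := by
    rcases Finset.subset_singleton_iff.1 hss with h' | h'
    · have hc0 : c = 0 := Finsupp.support_eq_empty.1 h'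
      rw [hcs, hc0]
      simp
    · rw [hcs, Finsupp.sum, h', Finset.sum_singleton]
  rcases R.reduced α hαΦ (c α : ℝ) (hβα ▸ hβΦ) with h1 | h1
  · apply hne
    rw [hβα, h1, one_smul]
  · have : (0:ℝ) ≤ (c α : ℝ) := by positivity
    rw [h1] at this
    linarith


lemma eq_of_refl_not_pos (hBase : IsBase R Pos Δ) {α x : V} (hα : α ∈ Δ) (hx : x ∈ Pos)
    (hr : R.refl α x ∉ Pos) : x = α := by
  by_contra h
  exact hr (refl_mem_pos hBase hα hx h)

/-- Positive roots whose simple-root decomposition is supported in `K`. -/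
def PosSupp (Pos K : Set V) : Set V :=
  {β | β ∈ Pos ∧ ∃ c : V →₀ ℕ, ↑c.support ⊆ K ∧ β = c.sum fun a m => (m : ℝ) • a}

lemma posSupp_sub_pos {K : Set V} : PosSupp Pos K ⊆ Pos := fun _ h => h.1

lemma pos_eq_posSupp_delta (hBase : IsBase R Pos Δ) : Pos = PosSupp Pos Δ := by
  ext β
  exact ⟨fun h => ⟨h, hBase.decomp β h⟩, fun h => h.1⟩

lemma refl_mem_posSupp (hBase : IsBase R Pos Δ) (hJ : J ⊆ Δ) {α β : V} (hα : α ∈ J)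
    (hβ : β ∈ PosSupp Pos J) (hne : β ≠ α) : R.refl α β ∈ PosSupp Pos J := by
  obtain ⟨hβP, c, hc, hcs⟩ := hβ
  have hαΦ : α ∈ R.Phi := hBase.pos_sub (hBase.delta_sub (hJ hα))
  have hp : R.refl α β ∈ Pos := refl_mem_pos hBase (hJ hα) hβP hne
  refine ⟨hp, ?_⟩
  obtain ⟨e, he, hes⟩ := hBase.decomp _ hp
  refine ⟨e, fun a ha => ?_, hes⟩
  by_contra haJ
  have hane : a ≠ α := fun h' => haJ (h' ▸ hα)
  have key : ((castR e + Finsupp.single α (R.pairing α β)).sum fun x r => r • x)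
      = (castR c).sum fun x r => r • x := by
    rw [sum_smul_eq_lc, map_add, ← sum_smul_eq_lc, ← sum_smul_eq_lc, castR_sum,
      Finsupp.sum_single_index (by simp), castR_sum, ← hes, ← hcs, refl_apply_mem hαΦ]
    abel
  have heq : castR e + Finsupp.single α (R.pairing α β) = castR c := by
    apply supported_sum_eq hBase ?_ ?_ key
    · intro x hx
      rcases Finset.mem_union.1 (Finsupp.support_add hx) with h' | h'
      · rw [castR_support] at h'
        exact he h'
      · have := Finsupp.support_single_subset h'
        simp only [Finset.mem_singleton] at this
        exact this ▸ hBase.delta_sub (hJ hα) |> fun _ => this ▸ (hJ hα)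
    · intro x hx
      rw [castR_support] at hx
      exact hJ (hc hx)
  have h0 := DFunLike.congr_fun heq a
  rw [Finsupp.add_apply, castR_apply, castR_apply, Finsupp.single_apply,
    if_neg (fun h' => hane h'.symm)] at h0
  have hca : c a = 0 := by
    by_contra hca
    exact haJ (hc (Finsupp.mem_support_iff.2 hca))
  rw [hca] at h0
  have : e a = 0 := by exact_mod_cast h0
  exact Finsupp.mem_support_iff.1 ha this

lemma simple_mem_of_posSupp (hBase : IsBase R Pos Δ) (hJ : J ⊆ Δ) {α : V} (hα : α ∈ Δ)
    (h : α ∈ PosSupp Pos J) : α ∈ J := by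
  obtain ⟨-, c, hc, hcs⟩ := h
  have heq : Finsupp.single α (1 : ℝ) = castR c := by
    apply supported_sum_eq hBase ?_ ?_
    · rw [Finsupp.sum_single_index (by simp), one_smul, castR_sum, ← hcs]
    · intro x hx
      have := Finsupp.support_single_subset hx
      simp only [Finset.mem_singleton] at this
      exact this ▸ hα
    · intro x hx
      rw [castR_support] at hx
      exact hJ (hc hx)
  have h1 := DFunLike.congr_fun heq α
  rw [Finsupp.single_apply, if_pos rfl, castR_apply] at h1
  have : c α ≠ 0 := by
    intro h0
    rw [h0] at h1
    norm_num at h1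
  exact hc (Finsupp.mem_support_iff.2 this)

lemma apply_pos (hBase : IsBase R Pos Δ) {w : V ≃ₗ[ℝ] V}
    (hw : ∀ β ∈ R.Phi, w β ∈ R.Phi) (hpos : ∀ a ∈ Δ, w a ∈ Pos) {β : V}
    (hβ : β ∈ Pos) : w β ∈ Pos := by
  have hβΦ : β ∈ R.Phi := hBase.pos_sub hβ
  have hwΦ : w β ∈ R.Phi := hw β hβΦ
  rcases hBase.mem_or_neg _ hwΦ with h | h
  · exact h
  exfalso
  obtain ⟨c, hc, hcs⟩ := hBase.decomp β hβ
  have h1 : w β ∈ coneR Δ := by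
    rw [hcs, map_finsuppSum, Finsupp.sum]
    apply sum_mem_coneR
    intro a ha
    rw [map_smul]
    exact coneR_smul _ (by positivity) (pos_sub_coneR hBase (hpos a (hc ha)))
  have h2 : -(w β) ∈ coneR Δ := pos_sub_coneR hBase h
  exact phi_ne_zero hwΦ (coneR_eq_zero hBase h1 h2)

lemma apply_not_pos (hBase : IsBase R Pos Δ) {K : Set V} (hK : K ⊆ Δ) {w : V ≃ₗ[ℝ] V}
    (hw : ∀ β ∈ R.Phi, w β ∈ R.Phi) (hneg : ∀ a ∈ K, w a ∉ Pos) {β : V}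
    (hβ : β ∈ PosSupp Pos K) : w β ∉ Pos := by
  intro hwP
  obtain ⟨hβP, c, hc, hcs⟩ := hβ
  have hβΦ : β ∈ R.Phi := hBase.pos_sub hβP
  have hwΦ : w β ∈ R.Phi := hw β hβΦ
  have h1 : -(w β) ∈ coneR Δ := by
    rw [hcs, map_finsuppSum, Finsupp.sum, ← Finset.sum_neg_distrib]
    apply sum_mem_coneR
    intro a ha
    rw [map_smul, ← smul_neg]
    have haΦ : w a ∈ R.Phi := hw a (hBase.pos_sub (hBase.delta_sub (hK (hc ha))))
    have : -(w a) ∈ Pos := by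
      rcases hBase.mem_or_neg _ haΦ with h' | h'
      · exact absurd h' (hneg a (hc ha))
      · exact h'
    exact coneR_smul _ (by positivity) (pos_sub_coneR hBase this)
  have h2 : w β ∈ coneR Δ := pos_sub_coneR hBase hwP
  exact phi_ne_zero hwΦ (coneR_eq_zero hBase h2 h1)


lemma apply_inv_apply (w : V ≃ₗ[ℝ] V) (x : V) : w (w⁻¹ x) = x := w.apply_symm_apply x

lemma inv_apply_apply (w : V ≃ₗ[ℝ] V) (x : V) : w⁻¹ (w x) = x := w.symm_apply_apply x

/-- The inversion set `N(w) = {β ∈ Φ⁺ : wβ ∉ Φ⁺}`. -/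
def Ninv (R : RootSystemData V) (Pos : Set V) (w : V ≃ₗ[ℝ] V) : Set V :=
  {β | β ∈ Pos ∧ w β ∉ Pos}

lemma Ninv_sub_pos {w : V ≃ₗ[ℝ] V} : Ninv R Pos w ⊆ Pos := fun _ h => h.1

lemma Ninv_finite (hBase : IsBase R Pos Δ) (w : V ≃ₗ[ℝ] V) : (Ninv R Pos w).Finite :=
  R.finite.subset (fun β hβ => hBase.pos_sub hβ.1)

lemma Ninv_one : Ninv R Pos 1 = ∅ := by
  ext β
  simp only [Ninv, Set.mem_setOf_eq, Set.mem_empty_iff_false, iff_false]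
  rintro ⟨h1, h2⟩
  exact h2 h1

lemma refl_image_image (α : V) (A : Set V) : R.refl α '' (R.refl α '' A) = A := by
  rw [← Set.image_comp]
  have : (⇑(R.refl α) ∘ ⇑(R.refl α)) = id := funext (refl_invol α)
  rw [this, Set.image_id]

/-- Left flip, positive case. -/
lemma ninv_refl_mul (hBase : IsBase R Pos Δ) {α : V} {w : V ≃ₗ[ℝ] V} (hα : α ∈ Δ)
    (hw : ∀ β ∈ R.Phi, w β ∈ R.Phi) (hδ : w⁻¹ α ∈ Pos) :
    Ninv R Pos (R.refl α * w) = insert (w⁻¹ α) (Ninv R Pos w) ∧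
      w⁻¹ α ∉ Ninv R Pos w := by
  have hαP := hBase.delta_sub hα
  have hαΦ := hBase.pos_sub hαP
  constructor
  · ext β
    constructor
    · rintro ⟨hβP, hs⟩
      have hx : w β ∈ R.Phi := hw β (hBase.pos_sub hβP)
      by_cases hxp : w β ∈ Pos
      · by_cases hxα : w β = α
        · left
          rw [← hxα, inv_apply_apply]
        · exfalso
          exact hs (refl_mem_pos hBase hα hxp hxα)
      · right
        exact ⟨hβP, hxp⟩
    · intro hβ
      rcases Set.mem_insert_iff.1 hβ with rfl | hβ
      · refine ⟨hδ, ?_⟩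
        show R.refl α (w (w⁻¹ α)) ∉ Pos
        rw [apply_inv_apply, refl_apply_self hαΦ]
        exact fun hc => hBase.not_both α ⟨hαP, hc⟩
      · obtain ⟨hβP, hxp⟩ := hβ
        refine ⟨hβP, ?_⟩
        show R.refl α (w β) ∉ Pos
        have hx : w β ∈ R.Phi := hw β (hBase.pos_sub hβP)
        have hnx : -(w β) ∈ Pos := (hBase.mem_or_neg _ hx).resolve_left hxp
        have hne : -(w β) ≠ α := by
          intro h'
          have hwβ : w β = -α := by rw [← h', neg_neg]
          have hββ : β = w⁻¹ (-α) := by rw [← hwβ, inv_apply_apply]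
          rw [map_neg] at hββ
          exact hBase.not_both (w⁻¹ α) ⟨hδ, hββ ▸ hβP⟩
        have hpos : R.refl α (-(w β)) ∈ Pos := refl_mem_pos hBase hα hnx hne
        rw [map_neg] at hpos
        intro hc
        exact hBase.not_both _ ⟨hc, hpos⟩
  · rintro ⟨-, h2⟩
    exact h2 (by rw [apply_inv_apply]; exact hαP)

lemma ninv_refl_mul_card_pos (hBase : IsBase R Pos Δ) {α : V} {w : V ≃ₗ[ℝ] V}
    (hα : α ∈ Δ) (hw : ∀ β ∈ R.Phi, w β ∈ R.Phi) (hδ : w⁻¹ α ∈ Pos) :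
    (Ninv R Pos (R.refl α * w)).ncard = (Ninv R Pos w).ncard + 1 := by
  obtain ⟨h1, h2⟩ := ninv_refl_mul hBase hα hw hδ
  rw [h1, Set.ncard_insert_of_notMem h2 (Ninv_finite hBase w)]

lemma ninv_refl_mul_card_neg (hBase : IsBase R Pos Δ) {α : V} {w : V ≃ₗ[ℝ] V}
    (hα : α ∈ Δ) (hw : ∀ β ∈ R.Phi, w β ∈ R.Phi) (hw' : ∀ β ∈ R.Phi, w⁻¹ β ∈ R.Phi)
    (hδ : w⁻¹ α ∉ Pos) :
    (Ninv R Pos w).ncard = (Ninv R Pos (R.refl α * w)).ncard + 1 := by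
  have hαP := hBase.delta_sub hα
  have hαΦ := hBase.pos_sub hαP
  have hδΦ : w⁻¹ α ∈ R.Phi := hw' α hαΦ
  have hδn : -(w⁻¹ α) ∈ Pos := (hBase.mem_or_neg _ hδΦ).resolve_left hδ
  have hw2 : ∀ β ∈ R.Phi, (R.refl α * w) β ∈ R.Phi := fun β hβ =>
    refl_mem_phi hαΦ (hw β hβ)
  have hinv : (R.refl α * w)⁻¹ α = -(w⁻¹ α) := by
    show (R.refl α * w)⁻¹ α = -(w⁻¹ α)
    rw [mul_inv_rev, refl_inv]
    show w⁻¹ (R.refl α α) = -(w⁻¹ α)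
    rw [refl_apply_self hαΦ, map_neg]
  have key := ninv_refl_mul_card_pos hBase hα hw2 (by rw [hinv]; exact hδn)
  rw [← mul_assoc, refl_mul_self, one_mul] at key
  exact key

/-- Right flip, positive case. -/
lemma ninv_mul_refl (hBase : IsBase R Pos Δ) {α : V} {w : V ≃ₗ[ℝ] V} (hα : α ∈ Δ)
    (hw : ∀ β ∈ R.Phi, w β ∈ R.Phi) (hp : w α ∈ Pos) :
    Ninv R Pos (w * R.refl α) = insert α (R.refl α '' Ninv R Pos w) ∧
      α ∉ R.refl α '' Ninv R Pos w := by
  have hαP := hBase.delta_sub hα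
  have hαΦ := hBase.pos_sub hαP
  have himg : α ∉ R.refl α '' Ninv R Pos w := by
    rintro ⟨γ, hγ, hγα⟩
    have h3 := congrArg (R.refl α) hγα
    rw [refl_invol, refl_apply_self hαΦ] at h3
    exact hBase.not_both α ⟨hαP, h3 ▸ hγ.1⟩
  refine ⟨?_, himg⟩
  ext β
  constructor
  · rintro ⟨hβP, hs⟩
    by_cases hβα : β = α
    · left; exact hβα
    · right
      have hsβ : R.refl α β ∈ Pos := refl_mem_pos hBase hα hβP hβα
      exact ⟨R.refl α β, ⟨hsβ, fun hc => hs hc⟩, refl_invol α β⟩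
  · intro hβ
    rcases Set.mem_insert_iff.1 hβ with rfl | ⟨γ, hγ, rfl⟩
    · refine ⟨hαP, ?_⟩
      show w (R.refl β β) ∉ Pos
      rw [refl_apply_self hαΦ, map_neg]
      exact fun hc => hBase.not_both (w β) ⟨hp, hc⟩
    · have hγα : γ ≠ α := fun h' => (h' ▸ hγ.2) hp
      refine ⟨refl_mem_pos hBase hα hγ.1 hγα, ?_⟩
      show w (R.refl α (R.refl α γ)) ∉ Pos
      rw [refl_invol]
      exact hγ.2

lemma ninv_mul_refl_card_pos (hBase : IsBase R Pos Δ) {α : V} {w : V ≃ₗ[ℝ] V}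
    (hα : α ∈ Δ) (hw : ∀ β ∈ R.Phi, w β ∈ R.Phi) (hp : w α ∈ Pos) :
    (Ninv R Pos (w * R.refl α)).ncard = (Ninv R Pos w).ncard + 1 := by
  obtain ⟨h1, h2⟩ := ninv_mul_refl hBase hα hw hp
  rw [h1, Set.ncard_insert_of_notMem h2 ((Ninv_finite hBase w).image _),
    Set.ncard_image_of_injective _ (R.refl α).injective]

/-- Right flip, negative case. -/
lemma ninv_mul_refl_neg (hBase : IsBase R Pos Δ) {α : V} {w : V ≃ₗ[ℝ] V} (hα : α ∈ Δ)
    (hw : ∀ β ∈ R.Phi, w β ∈ R.Phi) (hp : w α ∉ Pos) :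
    Ninv R Pos (w * R.refl α) = R.refl α '' (Ninv R Pos w \ {α}) ∧
      (Ninv R Pos w).ncard = (Ninv R Pos (w * R.refl α)).ncard + 1 := by
  have hαP := hBase.delta_sub hα
  have hαΦ := hBase.pos_sub hαP
  have hw2 : ∀ β ∈ R.Phi, (w * R.refl α) β ∈ R.Phi := fun β hβ =>
    hw _ (refl_mem_phi hαΦ hβ)
  have hwαΦ : w α ∈ R.Phi := hw α hαΦ
  have hp2 : (w * R.refl α) α ∈ Pos := by
    show w (R.refl α α) ∈ Pos
    rw [refl_apply_self hαΦ, map_neg]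
    exact (hBase.mem_or_neg _ hwαΦ).resolve_left hp
  obtain ⟨h1, h2⟩ := ninv_mul_refl hBase hα hw2 hp2
  rw [mul_assoc, refl_mul_self, mul_one] at h1
  have hαmem : α ∈ Ninv R Pos w := ⟨hαP, hp⟩
  have hset : R.refl α '' Ninv R Pos (w * R.refl α) = Ninv R Pos w \ {α} := by
    rw [h1, Set.insert_diff_self_of_notMem h2]
  constructor
  · rw [← hset, refl_image_image]
  · rw [h1, Set.ncard_insert_of_notMem h2
      ((Ninv_finite hBase (w * R.refl α)).image _),
      Set.ncard_image_of_injective _ (R.refl α).injective]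


lemma delta_sub_phi (hBase : IsBase R Pos Δ) : Δ ⊆ R.Phi :=
  fun x hx => hBase.pos_sub (hBase.delta_sub hx)

/-- Conjugation formula: `s_{wβ} = w s_β w⁻¹`. -/
lemma refl_conj {β : V} {w : V ≃ₗ[ℝ] V} (hβ : β ∈ R.Phi)
    (hw : ∀ x ∈ R.Phi, w x ∈ R.Phi) (hw' : ∀ x ∈ R.Phi, w⁻¹ x ∈ R.Phi) :
    R.refl (w β) = w * R.refl β * w⁻¹ := by
  have hγΦ : w β ∈ R.Phi := hw β hβ
  have hγ0 : w β ≠ 0 := phi_ne_zero hγΦ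
  have hcomp : ∀ z : V, R.refl (w β) (w (R.refl β (w⁻¹ z)))
      = z + (R.pairing β (w⁻¹ z) - R.pairing (w β) z) • (w β) := by
    intro z
    rw [refl_apply_mem hβ, map_sub, map_smul, apply_inv_apply, refl_apply_mem hγΦ,
      map_sub, map_smul, R.pairing_self (w β) hγΦ]
    simp only [smul_eq_mul]
    module
  have hwinvγ : w⁻¹ (w β) = β := inv_apply_apply w β
  have key : ∀ x ∈ R.Phi, R.pairing β (w⁻¹ x) - R.pairing (w β) x = 0 := by
    intro x hx
    set c := R.pairing β (w⁻¹ x) - R.pairing (w β) x with hc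
    by_contra hc0
    have hchain : ∀ k : ℕ, x + (k : ℝ) • c • (w β) ∈ R.Phi := by
      intro k
      induction k with
      | zero => simpa using hx
      | succ k ih =>
          have hcoef : R.pairing β (w⁻¹ (x + (k : ℝ) • c • w β))
              - R.pairing (w β) (x + (k : ℝ) • c • w β) = c := by
            rw [map_add, map_smul, map_smul, hwinvγ, map_add, map_smul, map_smul,
              map_add, map_smul, map_smul, R.pairing_self β hβ,
              R.pairing_self (w β) hγΦ]
            simp only [smul_eq_mul, hc]
            ring
          have hmem : R.refl (w β) (w (R.refl β (w⁻¹ (x + (k : ℝ) • c • w β))))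
              ∈ R.Phi := by
            apply refl_mem_phi hγΦ
            apply hw
            apply refl_mem_phi hβ
            apply hw'
            exact ih
          rw [hcomp, hcoef] at hmem
          have : x + (k : ℝ) • c • w β + c • w β
              = x + ((k + 1 : ℕ) : ℝ) • c • w β := by
            push_cast
            module
          rwa [this] at hmem
    have hinj : Function.Injective (fun k : ℕ => x + (k : ℝ) • c • (w β)) := by
      intro k k' hkk
      simp only [add_right_inj] at hkk
      have := smul_left_injective ℝ (smul_ne_zero hc0 hγ0) hkk
      exact_mod_cast this
    exact Set.not_infinite.2 R.finite (Set.infinite_of_injective_forall_mem hinj hchain)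
  have hfg : (R.pairing β).comp (w⁻¹ : V ≃ₗ[ℝ] V).toLinearMap = R.pairing (w β) := by
    apply LinearMap.ext_on R.span_top
    intro x hx
    have := key x hx
    simp only [LinearMap.coe_comp, Function.comp_apply, LinearEquiv.coe_coe]
    linarith [key x hx]
  apply LinearEquiv.toLinearMap_injective
  apply LinearMap.ext
  intro z
  show R.refl (w β) z = w (R.refl β (w⁻¹ z))
  have h1 : R.refl (w β) (w (R.refl β (w⁻¹ z))) = z := by
    rw [hcomp z]
    have : R.pairing β (w⁻¹ z) = R.pairing (w β) z := by
      have := DFunLike.congr_fun hfg z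
      simpa using this
    rw [this, sub_self, zero_smul, add_zero]
  have h2 := congrArg (R.refl (w β)) h1
  rw [refl_invol] at h2
  exact h2.symm

/-- The (strong) exchange property for a word ending against a simple root made
negative. -/
lemma exchange (hBase : IsBase R Pos Δ) :
    ∀ l : List (V ≃ₗ[ℝ] V), (∀ x ∈ l, x ∈ refls R Δ) → ∀ α ∈ Δ, l.prod α ∉ Pos →
      ∃ l' : List (V ≃ₗ[ℝ] V), (∀ x ∈ l', x ∈ refls R Δ) ∧
        l'.length + 1 = l.length ∧ l'.prod = l.prod * R.refl α := by
  intro l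
  induction l with
  | nil =>
      intro _ α hα hneg
      rw [List.prod_nil] at hneg
      exact absurd (hBase.delta_sub hα) hneg
  | cons s t ih =>
      intro hl α hα hneg
      obtain ⟨γ, hγ, rfl⟩ := hl s (List.mem_cons_self)
      have hlt : ∀ x ∈ t, x ∈ refls R Δ := fun x hx => hl x (List.mem_cons_of_mem _ hx)
      by_cases hv : t.prod α ∈ Pos
      · have heqγ : t.prod α = γ := by
          apply eq_of_refl_not_pos hBase hγ hv
          intro hc
          apply hneg
          rw [List.prod_cons]
          exact hc
        have hαΦ : α ∈ R.Phi := delta_sub_phi hBase hα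
        have hword : IsWordOf R Δ t.prod := ⟨t, hlt, rfl⟩
        have hconj : R.refl γ = t.prod * R.refl α * (t.prod)⁻¹ := by
          rw [← heqγ]
          exact refl_conj hαΦ
            (fun x hx => hword.maps_phi (delta_sub_phi hBase) hx)
            (fun x hx => hword.inv.maps_phi (delta_sub_phi hBase) hx)
        refine ⟨t, hlt, by simp, ?_⟩
        rw [List.prod_cons, hconj]
        group
        rw [mul_assoc, refl_mul_self, mul_one]
      · obtain ⟨t', ht', htlen, htp⟩ := ih hlt α hα hv
        refine ⟨R.refl γ :: t', fun x hx => ?_, by simp [← htlen], ?_⟩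
        · rcases List.mem_cons.1 hx with rfl | hx
          exacts [⟨γ, hγ, rfl⟩, ht' x hx]
        · rw [List.prod_cons, List.prod_cons, htp, mul_assoc]

lemma len_le_of_word {l : List (V ≃ₗ[ℝ] V)} (hl : ∀ x ∈ l, x ∈ refls R Δ) :
    len R Δ l.prod ≤ l.length :=
  Nat.sInf_le ⟨l, rfl, hl, rfl⟩

lemma exists_reduced_word {w : V ≃ₗ[ℝ] V} (h : IsWordOf R Δ w) :
    ∃ l : List (V ≃ₗ[ℝ] V), (∀ x ∈ l, x ∈ refls R Δ) ∧ l.prod = w ∧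
      l.length = len R Δ w := by
  obtain ⟨l0, hl0, hp0⟩ := h
  have hne : {n | ∃ ls : List (V ≃ₗ[ℝ] V), ls.length = n ∧
      (∀ x ∈ ls, x ∈ refls R Δ) ∧ ls.prod = w}.Nonempty := ⟨l0.length, l0, rfl, hl0, hp0⟩
  obtain ⟨ls, hlen, hmem, hprod⟩ := Nat.sInf_mem hne
  exact ⟨ls, hmem, hprod, hlen⟩

lemma len_mul_simple_le {w s : V ≃ₗ[ℝ] V} (h : IsWordOf R Δ w)
    (hs : s ∈ refls R Δ) : len R Δ (w * s) ≤ len R Δ w + 1 := by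
  obtain ⟨l, hl, hprod, hlen⟩ := exists_reduced_word h
  have : len R Δ ((l ++ [s]).prod) ≤ l.length + 1 := by
    have := len_le_of_word (l := l ++ [s]) (fun x hx => by
      rcases List.mem_append.1 hx with h' | h'
      · exact hl x h'
      · simp only [List.mem_singleton] at h'
        exact h' ▸ hs)
    simpa using this
  rwa [List.prod_append, List.prod_singleton, hprod, hlen] at this

lemma ncard_le_word (hBase : IsBase R Pos Δ) :
    ∀ l : List (V ≃ₗ[ℝ] V), (∀ x ∈ l, x ∈ refls R Δ) →
      (Ninv R Pos l.prod).ncard ≤ l.length := by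
  intro l
  induction l with
  | nil =>
      intro _
      rw [List.prod_nil, Ninv_one]
      simp
  | cons s t ih =>
      intro hl
      obtain ⟨α, hα, rfl⟩ := hl s (List.mem_cons_self)
      have hlt : ∀ x ∈ t, x ∈ refls R Δ := fun x hx => hl x (List.mem_cons_of_mem _ hx)
      have hword : IsWordOf R Δ t.prod := ⟨t, hlt, rfl⟩
      have hwp : ∀ β ∈ R.Phi, t.prod β ∈ R.Phi :=
        fun β hβ => hword.maps_phi (delta_sub_phi hBase) hβ
      have hwp' : ∀ β ∈ R.Phi, (t.prod)⁻¹ β ∈ R.Phi :=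
        fun β hβ => hword.inv.maps_phi (delta_sub_phi hBase) hβ
      rw [List.prod_cons]
      by_cases hδ : (t.prod)⁻¹ α ∈ Pos
      · rw [ninv_refl_mul_card_pos hBase hα hwp hδ]
        exact Nat.succ_le_succ (ih hlt)
      · have hflip := ninv_refl_mul_card_neg hBase hα hwp hwp' hδ
        have := ih hlt
        simp only [List.length_cons]
        omega

lemma ncard_le_len (hBase : IsBase R Pos Δ) {w : V ≃ₗ[ℝ] V} (h : IsWordOf R Δ w) :
    (Ninv R Pos w).ncard ≤ len R Δ w := by
  obtain ⟨l, hl, hprod, hlen⟩ := exists_reduced_word h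
  rw [← hlen, ← hprod]
  exact ncard_le_word hBase l hl

lemma len_mul_refl_lt (hBase : IsBase R Pos Δ) {w : V ≃ₗ[ℝ] V} {α : V}
    (h : IsWordOf R Δ w) (hα : α ∈ Δ) (hneg : w α ∉ Pos) :
    len R Δ (w * R.refl α) + 1 ≤ len R Δ w := by
  obtain ⟨l, hl, hprod, hlen⟩ := exists_reduced_word h
  obtain ⟨l', hl', hlen', hprod'⟩ := exchange hBase l hl α hα (by rw [hprod]; exact hneg)
  have := len_le_of_word hl'
  rw [hprod', hprod] at this
  omega

lemma not_pos_of_len_lt (hBase : IsBase R Pos Δ) {w : V ≃ₗ[ℝ] V} {α : V}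
    (h : IsWordOf R Δ w) (hα : α ∈ Δ)
    (hlt : len R Δ (w * R.refl α) < len R Δ w) : w α ∉ Pos := by
  have hαΦ : α ∈ R.Phi := delta_sub_phi hBase hα
  intro hpos
  have h2 : (w * R.refl α) α ∉ Pos := by
    show w (R.refl α α) ∉ Pos
    rw [refl_apply_self hαΦ, map_neg]
    exact fun hc => hBase.not_both (w α) ⟨hpos, hc⟩
  have hws : IsWordOf R Δ (w * R.refl α) := h.mul (IsWordOf.simple ⟨α, hα, rfl⟩)
  have := len_mul_refl_lt hBase hws hα h2
  rw [mul_assoc, refl_mul_self, mul_one] at this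
  omega

lemma len_le_ncard (hBase : IsBase R Pos Δ) :
    ∀ n : ℕ, ∀ w : V ≃ₗ[ℝ] V, IsWordOf R Δ w → (Ninv R Pos w).ncard = n →
      len R Δ w ≤ n := by
  intro n
  induction n using Nat.strong_induction_on with
  | _ n ih =>
    intro w h hn
    have hwp : ∀ β ∈ R.Phi, w β ∈ R.Phi :=
      fun β hβ => h.maps_phi (delta_sub_phi hBase) hβ
    by_cases hex : ∃ α ∈ Δ, w α ∉ Pos
    · obtain ⟨α, hα, hneg⟩ := hex
      obtain ⟨-, hcard⟩ := ninv_mul_refl_neg hBase hα hwp hneg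
      have hws : IsWordOf R Δ (w * R.refl α) := h.mul (IsWordOf.simple ⟨α, hα, rfl⟩)
      have hle := ih ((Ninv R Pos (w * R.refl α)).ncard) (by omega) _ hws rfl
      have hlen2 : len R Δ w ≤ len R Δ (w * R.refl α) + 1 := by
        have := len_mul_simple_le hws (⟨α, hα, rfl⟩ : R.refl α ∈ refls R Δ)
        rwa [mul_assoc, refl_mul_self, mul_one] at this
      omega
    · push_neg at hex
      by_contra hcon
      have h1 : 1 ≤ len R Δ w := by omega
      obtain ⟨l, hl, hprod, hlen⟩ := exists_reduced_word h
      rcases List.eq_nil_or_concat l with rfl | ⟨l₁, a, rfl⟩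
      · rw [List.length_nil] at hlen
        omega
      · rw [List.concat_eq_append] at hl hprod hlen
        obtain ⟨α, hα, ha⟩ := hl a (by simp)
        have hw1 : w * R.refl α = l₁.prod := by
          rw [← hprod, List.prod_append, List.prod_singleton, ha, mul_assoc,
            refl_mul_self, mul_one]
        have hlt : len R Δ (w * R.refl α) < len R Δ w := by
          have hle1 : len R Δ (l₁.prod) ≤ l₁.length :=
            len_le_of_word (fun x hx => hl x (List.mem_append_left _ hx))
          rw [List.length_append, List.length_singleton] at hlen
          rw [hw1]
          omega
        exact not_pos_of_len_lt hBase h hα hlt (hex α hα)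


lemma len_eq_ncard (hBase : IsBase R Pos Δ) {w : V ≃ₗ[ℝ] V} (h : IsWordOf R Δ w) :
    len R Δ w = (Ninv R Pos w).ncard :=
  le_antisymm (len_le_ncard hBase _ w h rfl) (ncard_le_len hBase h)

lemma len_zero_eq_one {w : V ≃ₗ[ℝ] V} (h : IsWordOf R Δ w) (h0 : len R Δ w = 0) :
    w = 1 := by
  obtain ⟨l, hl, hprod, hlen⟩ := exists_reduced_word h
  rw [h0, List.length_eq_zero_iff] at hlen
  rw [← hprod, hlen, List.prod_nil]

lemma wD_word (hBase : IsBase R Pos Δ) (hΔ : Δ.Nonempty) {wD : V ≃ₗ[ℝ] V}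
    (hwD : IsLongestIn R Δ (weylGroup R) wD) : IsWordOf R Δ wD := by
  obtain ⟨α, hα⟩ := hΔ
  have hαΦ := delta_sub_phi hBase hα
  have hsW : R.refl α ∈ weylGroup R := Subgroup.subset_closure ⟨α, hαΦ, rfl⟩
  have hlen1 : 1 ≤ len R Δ (R.refl α) := by
    rcases Nat.eq_zero_or_pos (len R Δ (R.refl α)) with h0 | h1
    · exfalso
      have h1 := len_zero_eq_one (IsWordOf.simple ⟨α, hα, rfl⟩) h0
      have h2 : R.refl α α = α := by rw [h1]; rfl
      rw [refl_apply_self hαΦ] at h2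
      have h3 : (2 : ℝ) • α = 0 := by
        rw [two_smul]
        nth_rewrite 1 [← h2]
        exact neg_add_cancel α
      rcases smul_eq_zero.1 h3 with h4 | h4
      · norm_num at h4
      · exact phi_ne_zero hαΦ h4
    · exact h1
  have hge : 1 ≤ len R Δ wD := le_trans hlen1 (hwD.2 _ hsW)
  have hne : {n | ∃ ls : List (V ≃ₗ[ℝ] V), ls.length = n ∧
      (∀ x ∈ ls, x ∈ refls R Δ) ∧ ls.prod = wD}.Nonempty := by
    by_contra hcon
    rw [Set.not_nonempty_iff_eq_empty] at hcon
    have h0 : len R Δ wD = sInf {n | ∃ ls : List (V ≃ₗ[ℝ] V), ls.length = n ∧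
        (∀ x ∈ ls, x ∈ refls R Δ) ∧ ls.prod = wD} := rfl
    rw [hcon, Nat.sInf_empty] at h0
    omega
  obtain ⟨ls, hlen, hmem, hprod⟩ := Nat.sInf_mem hne
  exact ⟨ls, hmem, hprod⟩

lemma Ninv_longest (hBase : IsBase R Pos Δ) (hΔ : Δ.Nonempty) {wD : V ≃ₗ[ℝ] V}
    (hwD : IsLongestIn R Δ (weylGroup R) wD) :
    Ninv R Pos wD = Pos ∧ IsWordOf R Δ wD := by
  have hword := wD_word hBase hΔ hwD
  refine ⟨?_, hword⟩
  have hwp : ∀ β ∈ R.Phi, wD β ∈ R.Phi :=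
    fun β hβ => hword.maps_phi (delta_sub_phi hBase) hβ
  apply Set.Subset.antisymm Ninv_sub_pos
  by_cases hex : ∃ α ∈ Δ, wD α ∈ Pos
  · exfalso
    obtain ⟨α, hα, hp⟩ := hex
    have hcard := ninv_mul_refl_card_pos hBase hα hwp hp
    have hws : IsWordOf R Δ (wD * R.refl α) := hword.mul (IsWordOf.simple ⟨α, hα, rfl⟩)
    have h1 : len R Δ (wD * R.refl α) = len R Δ wD + 1 := by
      rw [len_eq_ncard hBase hws, len_eq_ncard hBase hword, hcard]
    have hsW : R.refl α ∈ weylGroup R :=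
      Subgroup.subset_closure ⟨α, delta_sub_phi hBase hα, rfl⟩
    have := hwD.2 _ (mul_mem hwD.1 hsW)
    omega
  · push_neg at hex
    intro β hβ
    exact ⟨hβ, apply_not_pos hBase subset_rfl hwp hex ⟨hβ, hBase.decomp β hβ⟩⟩

lemma wordJ_sub_span (hJΦ : J ⊆ R.Phi) :
    ∀ l : List (V ≃ₗ[ℝ] V), (∀ x ∈ l, x ∈ refls R J) →
      ∀ β : V, l.prod β - β ∈ Submodule.span ℝ J := by
  intro l
  induction l with
  | nil =>
      intro _ β
      simp only [List.prod_nil]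
      show (1 : V ≃ₗ[ℝ] V) β - β ∈ _
      rw [show (1 : V ≃ₗ[ℝ] V) β = β from rfl, sub_self]
      exact Submodule.zero_mem _
  | cons s t ih =>
      intro hl β
      obtain ⟨γ, hγ, rfl⟩ := hl s (List.mem_cons_self)
      have hlt : ∀ x ∈ t, x ∈ refls R J := fun x hx => hl x (List.mem_cons_of_mem _ hx)
      rw [List.prod_cons]
      show R.refl γ (t.prod β) - β ∈ _
      rw [refl_apply_mem (hJΦ hγ)]
      have heq : t.prod β - R.pairing γ (t.prod β) • γ - β
          = (t.prod β - β) - R.pairing γ (t.prod β) • γ := by abel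
      rw [heq]
      exact Submodule.sub_mem _ (ih hlt β)
        (Submodule.smul_mem _ _ (Submodule.subset_span hγ))

lemma Ninv_sub_posSupp (hBase : IsBase R Pos Δ) (hJ : J ⊆ Δ) {w : V ≃ₗ[ℝ] V}
    (h : IsWordOf R J w) : Ninv R Pos w ⊆ PosSupp Pos J := by
  intro β hβ
  obtain ⟨hβP, hneg⟩ := hβ
  have hJΦ : J ⊆ R.Phi := fun x hx => delta_sub_phi hBase (hJ hx)
  have hwΦ : w β ∈ R.Phi := h.maps_phi hJΦ (hBase.pos_sub hβP)
  have hnw : -(w β) ∈ Pos := (hBase.mem_or_neg _ hwΦ).resolve_left hneg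
  obtain ⟨c, hc, hcs⟩ := hBase.decomp β hβP
  obtain ⟨d, hd, hds⟩ := hBase.decomp _ hnw
  obtain ⟨l, hl, hlp⟩ := h
  have hspan : β - w β ∈ Submodule.span ℝ J := by
    have h2 := Submodule.neg_mem _ (hlp ▸ wordJ_sub_span hJΦ l hl β)
    rwa [neg_sub] at h2
  obtain ⟨e, he, hes⟩ := Submodule.mem_span_set.1 hspan
  have key : ((castR c + castR d).sum fun a r => r • a) = e.sum fun a r => r • a := by
    rw [sum_smul_eq_lc, map_add, ← sum_smul_eq_lc, ← sum_smul_eq_lc, castR_sum,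
      castR_sum, ← hcs, ← hds, hes, sub_eq_add_neg]
  have heq : castR c + castR d = e := by
    apply supported_sum_eq hBase ?_ (fun x hx => hJ (he hx)) key
    intro x hx
    rcases Finset.mem_union.1 (Finsupp.support_add hx) with h' | h' <;>
      rw [castR_support] at h'
    exacts [hc h', hd h']
  refine ⟨hβP, c, fun a ha => ?_, hcs⟩
  by_contra haJ
  have h0 := DFunLike.congr_fun heq a
  have he0 : e a = 0 := Finsupp.notMem_support_iff.1 (fun hc' => haJ (he hc'))
  rw [Finsupp.add_apply, castR_apply, castR_apply, he0] at h0
  have hc1 : (0:ℝ) ≤ (c a : ℝ) := Nat.cast_nonneg _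
  have hd1 : (0:ℝ) ≤ (d a : ℝ) := Nat.cast_nonneg _
  have : (c a : ℝ) = 0 := by linarith
  have : c a = 0 := by exact_mod_cast this
  exact Finsupp.mem_support_iff.1 ha this

lemma Ninv_wJ (hBase : IsBase R Pos Δ) (hJ : J ⊆ Δ) {wJ : V ≃ₗ[ℝ] V}
    (hwJ : IsLongestIn R Δ (WsubJ R J) wJ) :
    Ninv R Pos wJ = PosSupp Pos J ∧ IsWordOf R Δ wJ := by
  have hwordJ : IsWordOf R J wJ := isWordOf_iff_mem_closure.2 hwJ.1
  have hword : IsWordOf R Δ wJ := hwordJ.mono hJ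
  refine ⟨?_, hword⟩
  apply Set.Subset.antisymm (Ninv_sub_posSupp hBase hJ hwordJ)
  have hwp : ∀ β ∈ R.Phi, wJ β ∈ R.Phi :=
    fun β hβ => hword.maps_phi (delta_sub_phi hBase) hβ
  by_cases hex : ∃ α ∈ J, wJ α ∈ Pos
  · exfalso
    obtain ⟨α, hαJ, hp⟩ := hex
    have hα : α ∈ Δ := hJ hαJ
    have hcard := ninv_mul_refl_card_pos hBase hα hwp hp
    have hws : IsWordOf R Δ (wJ * R.refl α) := hword.mul (IsWordOf.simple ⟨α, hα, rfl⟩)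
    have h1 : len R Δ (wJ * R.refl α) = len R Δ wJ + 1 := by
      rw [len_eq_ncard hBase hws, len_eq_ncard hBase hword, hcard]
    have hsW : R.refl α ∈ WsubJ R J := Subgroup.subset_closure ⟨α, hαJ, rfl⟩
    have := hwJ.2 _ (mul_mem hwJ.1 hsW)
    omega
  · push_neg at hex
    intro β hβ
    exact ⟨hβ.1, apply_not_pos hBase hJ hwp hex hβ⟩

lemma mem_WsubJ_of_ninv (hBase : IsBase R Pos Δ) (hJ : J ⊆ Δ) :
    ∀ n : ℕ, ∀ w : V ≃ₗ[ℝ] V, IsWordOf R Δ w → (Ninv R Pos w).ncard = n →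
      Ninv R Pos w ⊆ PosSupp Pos J → w ∈ WsubJ R J := by
  intro n
  induction n using Nat.strong_induction_on with
  | _ n ih =>
    intro w h hn hsub
    have hwp : ∀ β ∈ R.Phi, w β ∈ R.Phi :=
      fun β hβ => h.maps_phi (delta_sub_phi hBase) hβ
    by_cases hex : ∃ α ∈ Δ, w α ∉ Pos
    · obtain ⟨α, hα, hneg⟩ := hex
      have hαN : α ∈ Ninv R Pos w := ⟨hBase.delta_sub hα, hneg⟩
      have hαJ : α ∈ J := simple_mem_of_posSupp hBase hJ hα (hsub hαN)
      obtain ⟨hset, hcard⟩ := ninv_mul_refl_neg hBase hα hwp hneg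
      have hws : IsWordOf R Δ (w * R.refl α) := h.mul (IsWordOf.simple ⟨α, hα, rfl⟩)
      have hsub' : Ninv R Pos (w * R.refl α) ⊆ PosSupp Pos J := by
        rw [hset]
        rintro x ⟨γ, ⟨hγN, hγα⟩, rfl⟩
        exact refl_mem_posSupp hBase hJ hαJ (hsub hγN) (by simpa using hγα)
      have hmem := ih _ (by omega) _ hws rfl hsub'
      have hw2 : w = (w * R.refl α) * R.refl α := by
        rw [mul_assoc, refl_mul_self, mul_one]
      rw [hw2]
      exact mul_mem hmem (Subgroup.subset_closure ⟨α, hαJ, rfl⟩)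
    · push_neg at hex
      have hN : Ninv R Pos w = ∅ := by
        ext β
        simp only [Set.mem_empty_iff_false, iff_false]
        rintro ⟨hβP, hneg⟩
        exact hneg (apply_pos hBase hwp hex hβP)
      have hlen : len R Δ w = 0 := by
        have := len_le_ncard hBase 0 w h (by rw [hN]; simp)
        omega
      rw [len_zero_eq_one h hlen]
      exact one_mem _

lemma chainProd_succ {G : Type*} [Group G] (s : ℕ → G) (i : ℕ) :
    chainProd s (i + 1) = s (i + 1) * chainProd s i := by
  unfold chainProd
  rw [List.range'_concat, List.map_append, List.reverse_append, List.map_singleton,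
    List.reverse_singleton, List.singleton_append, List.prod_cons]
  norm_num [add_comm]

lemma chainElt_id_succ {G : Type*} [Group G] (s : ℕ → G) (w : G) (i : ℕ) :
    chainElt (id : G → G) s w (i + 1) = s (i + 1) * chainElt id s w i := by
  cases i with
  | zero =>
      show (if 1 = 0 then w else id (chainProd s 1 * w)) = s 1 * (if 0 = 0 then w else _)
      rw [if_neg (by norm_num), if_pos rfl]
      have h1 : chainProd s 1 = s 1 := by
        unfold chainProd
        norm_num [List.range']
      rw [h1]
      rfl
  | succ i =>
      show id (chainProd s (i + 2) * w) = s (i + 2) * id (chainProd s (i + 1) * w)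
      rw [id, id, chainProd_succ s (i + 1), mul_assoc]

end Aux

/-- Let `J ⊆ Δ` and `u ∈ W`.  If `w_J w_Δ <_∅ u w_Δ` in the weak left
order on `W`, then `u ∈ W_J`.  Here `w_Δ` and `w_J` are the longest elements of `W`
and of `W_J` respectively, and `<_∅` is the weak left order (i.e. `<_J` for `J = ∅`,
with trivial projection). -/
theorem statement_5 {V : Type} [AddCommGroup V] [Module ℝ V]
    (R : RootSystemData V) (Pos Δ : Set V) (hBase : IsBase R Pos Δ)
    (J : Set V) (hJ : J ⊆ Δ)
    (wD : V ≃ₗ[ℝ] V) (hwD : IsLongestIn R Δ (weylGroup R) wD)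
    (wJ : V ≃ₗ[ℝ] V) (hwJ : IsLongestIn R Δ (WsubJ R J) wJ)
    (u : V ≃ₗ[ℝ] V) (hu : u ∈ weylGroup R)
    (hlt : ltJ (refls R Δ) (len R Δ) id (wJ * wD) (u * wD)) :
    u ∈ WsubJ R J := by
  classical
  by_cases hΔ : Δ.Nonempty
  · obtain ⟨r, hr1, s, hsS, hinc, hend⟩ := hlt
    obtain ⟨hND, hwordD⟩ := Ninv_longest hBase hΔ hwD
    obtain ⟨hNJ, hwordJ⟩ := Ninv_wJ hBase hJ hwJ
    have hΔΦ := delta_sub_phi hBase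
    have hchain : ∀ m : ℕ, m ≤ r → IsWordOf R Δ (chainElt id s (wJ * wD) m) ∧
        Ninv R Pos (wJ * wD) ⊆ Ninv R Pos (chainElt id s (wJ * wD) m) := by
      intro m
      induction m with
      | zero =>
          intro _
          have h0 : chainElt (id : (V ≃ₗ[ℝ] V) → _) s (wJ * wD) 0 = wJ * wD := if_pos rfl
          rw [h0]
          exact ⟨hwordJ.mul hwordD, subset_rfl⟩
      | succ m ihm =>
          intro hm
          obtain ⟨hword_m, hsub_m⟩ := ihm (le_trans (Nat.le_succ m) hm)
          obtain ⟨α, hα, hsα⟩ := hsS (m + 1) (by omega) hm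
          have hstep : chainElt id s (wJ * wD) (m + 1)
              = R.refl α * chainElt id s (wJ * wD) m := by
            rw [chainElt_id_succ, ← hsα]
          have hwp : ∀ β ∈ R.Phi, (chainElt id s (wJ * wD) m) β ∈ R.Phi :=
            fun β hβ => hword_m.maps_phi hΔΦ hβ
          have hwp' : ∀ β ∈ R.Phi, (chainElt id s (wJ * wD) m)⁻¹ β ∈ R.Phi :=
            fun β hβ => hword_m.inv.maps_phi hΔΦ hβ
          have hword_m1 : IsWordOf R Δ (chainElt id s (wJ * wD) (m + 1)) := by
            rw [hstep]
            exact (IsWordOf.simple ⟨α, hα, rfl⟩).mul hword_m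
          refine ⟨hword_m1, ?_⟩
          by_cases hδ : (chainElt id s (wJ * wD) m)⁻¹ α ∈ Pos
          · obtain ⟨hset, -⟩ := ninv_refl_mul hBase hα hwp hδ
            rw [hstep, hset]
            exact subset_trans hsub_m (Set.subset_insert _ _)
          · exfalso
            have hcard := ninv_refl_mul_card_neg hBase hα hwp hwp' hδ
            have hlt2 := hinc (m + 1) (by omega) hm
            simp only [Nat.add_sub_cancel] at hlt2
            rw [hstep, len_eq_ncard hBase ((IsWordOf.simple ⟨α, hα, rfl⟩).mul hword_m),
              len_eq_ncard hBase hword_m] at hlt2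
            omega
    obtain ⟨hwordR, hsubR⟩ := hchain r (le_refl r)
    rw [hend] at hwordR hsubR
    have hwordu : IsWordOf R Δ u := by
      have hh : u = (u * wD) * wD⁻¹ := by group
      rw [hh]
      exact hwordR.mul hwordD.inv
    have hup : ∀ β ∈ R.Phi, u β ∈ R.Phi := fun β hβ => hwordu.maps_phi hΔΦ hβ
    have hNu : Ninv R Pos u ⊆ PosSupp Pos J := by
      rintro γ ⟨hγP, hγneg⟩
      have hγΦ := hBase.pos_sub hγP
      have hnγΦ : -γ ∈ R.Phi := neg_mem_phi hγΦ
      have hβΦ : wD⁻¹ (-γ) ∈ R.Phi := hwordD.inv.maps_phi hΔΦ hnγΦ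
      have hwDβ : wD (wD⁻¹ (-γ)) = -γ := apply_inv_apply wD (-γ)
      have hβP : wD⁻¹ (-γ) ∈ Pos := by
        rcases hBase.mem_or_neg _ hβΦ with h | h
        · exact h
        · exfalso
          have hmem : -(wD⁻¹ (-γ)) ∈ Ninv R Pos wD := by rw [hND]; exact h
          have h2 : wD (-(wD⁻¹ (-γ))) ∉ Pos := hmem.2
          rw [map_neg, hwDβ, neg_neg] at h2
          exact h2 hγP
      have hβnot : wD⁻¹ (-γ) ∉ Ninv R Pos (u * wD) := by
        rintro ⟨-, hneg2⟩
        apply hneg2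
        show u (wD (wD⁻¹ (-γ))) ∈ Pos
        rw [hwDβ, map_neg]
        have huγΦ : u γ ∈ R.Phi := hup γ hγΦ
        exact (hBase.mem_or_neg _ huγΦ).resolve_left hγneg
      have hβnot2 : wD⁻¹ (-γ) ∉ Ninv R Pos (wJ * wD) := fun hc => hβnot (hsubR hc)
      have hβJ : wJ (wD (wD⁻¹ (-γ))) ∈ Pos := by
        by_contra hc
        exact hβnot2 ⟨hβP, hc⟩
      rw [hwDβ, map_neg] at hβJ
      have h3 : wJ γ ∉ Pos := fun hc => hBase.not_both _ ⟨hc, hβJ⟩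
      have h4 : γ ∈ Ninv R Pos wJ := ⟨hγP, h3⟩
      rw [hNJ] at h4
      exact h4
    exact mem_WsubJ_of_ninv hBase hJ _ u hwordu rfl hNu
  · have hPos : Pos = ∅ := by
      ext β
      simp only [Set.mem_empty_iff_false, iff_false]
      intro hβ
      obtain ⟨c, hc, hcs⟩ := hBase.decomp β hβ
      have hc0 : c = 0 := by
        ext a
        by_contra h0
        exact hΔ ⟨a, hc (Finsupp.mem_support_iff.2 h0)⟩
      rw [hc0, Finsupp.sum_zero_index] at hcs
      exact R.zero_not_mem (hcs ▸ hBase.pos_sub hβ)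
    have hPhi : R.Phi = ∅ := by
      ext α
      simp only [Set.mem_empty_iff_false, iff_false]
      intro hα
      rcases hBase.mem_or_neg α hα with h | h <;> rw [hPos] at h <;> exact h
    have hrefls : refls R R.Phi = ∅ := by
      rw [hPhi]
      ext x
      simp [refls]
    have hu1 : u = 1 := by
      rw [weylGroup, hrefls, Subgroup.closure_empty, Subgroup.mem_bot] at hu
      exact hu
    rw [hu1]
    exact one_mem _

end PaperSp
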